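/- arXiv:1604.02684 — 2 statements merged into one kernel-verified Lean document; each statement's English description precedes it below -/
import Mathlib

section
/- Let g be a surjective endomorphism of a compact Kähler manifold (X, ω) of dimension n, and let V ⊆ H^{1,1}(X, ℝ) be a g*-invariant linear subspace containing the class of a Kähler current. Then the first dynamical degree d₁(g) (the spectral radius of g* on H^{1,1}(X,ℝ)) equals the spectral radius of g* restricted to V. -/
open Filter

theorem cone_norm_bound {H : Type*} [NormedAddCommGroup H] [NormedSpace ℝ H]
    [FiniteDimensional ℝ H] (P : Set H)
    (hPclosed : IsClosed P)
    (hPsmul : ∀ t : ℝ, 0 ≤ t → ∀ a ∈ P, t • a ∈ P)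
    (hPsalient : ∀ a, a ∈ P → -a ∈ P → a = 0) :
    ∃ c > 0, ∀ a ∈ P, ∀ b ∈ P, c * ‖a‖ ≤ ‖a + b‖ := by
  by_cases hP0 : ∀ a ∈ P, a = (0 : H)
  · refine ⟨1, one_pos, fun a ha b hb => ?_⟩
    rw [hP0 a ha]
    simp
  · push_neg at hP0
    obtain ⟨a₀, ha₀P, ha₀⟩ := hP0
    have h0P : (0 : H) ∈ P := by
      have := hPsmul 0 le_rfl a₀ ha₀P
      simpa using this
    set K : Set (H × H) :=
      (P ∩ Metric.sphere 0 1) ×ˢ (P ∩ Metric.closedBall 0 2) with hK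
    have hKc : IsCompact K := by
      apply IsCompact.prod
      · apply Metric.isCompact_of_isClosed_isBounded
        · exact hPclosed.inter Metric.isClosed_sphere
        · exact Metric.isBounded_sphere.subset Set.inter_subset_right
      · apply Metric.isCompact_of_isClosed_isBounded
        · exact hPclosed.inter Metric.isClosed_closedBall
        · exact Metric.isBounded_closedBall.subset Set.inter_subset_right
    have hKne : K.Nonempty := by
      refine ⟨(‖a₀‖⁻¹ • a₀, 0), ⟨?_, ?_⟩, h0P, by simp⟩
      · exact hPsmul _ (inv_nonneg.2 (norm_nonneg _)) _ ha₀P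
      · rw [mem_sphere_zero_iff_norm, norm_smul, norm_inv, norm_norm,
          inv_mul_cancel₀ (norm_ne_zero_iff.2 ha₀)]
    obtain ⟨p₀, hp₀K, hp₀min⟩ :=
      hKc.exists_isMinOn hKne ((continuous_fst.add continuous_snd).norm.continuousOn)
    set c₀ : ℝ := ‖p₀.1 + p₀.2‖ with hc₀
    have hc₀pos : 0 < c₀ := by
      rcases hp₀K with ⟨⟨h1P, h1s⟩, ⟨h2P, _⟩⟩
      rw [mem_sphere_zero_iff_norm] at h1s
      rcases eq_or_lt_of_le (norm_nonneg (p₀.1 + p₀.2)) with h | h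
      · exfalso
        have hsum : p₀.1 + p₀.2 = 0 := by rwa [eq_comm, norm_eq_zero] at h
        have h12 : p₀.1 = -p₀.2 := eq_neg_of_add_eq_zero_left hsum
        have hneg : -p₀.2 ∈ P := h12 ▸ h1P
        have h2z := hPsalient _ h2P hneg
        rw [h12, h2z, neg_zero, norm_zero] at h1s
        exact one_ne_zero h1s.symm
      · exact h
    refine ⟨min c₀ 1, lt_min hc₀pos one_pos, fun a ha b hb => ?_⟩
    rcases eq_or_ne a 0 with rfl | hane
    · simp
    · have hna : 0 < ‖a‖ := norm_pos_iff.2 hane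
      set t : ℝ := ‖a‖⁻¹ with ht
      have htpos : 0 < t := inv_pos.2 hna
      have ha' : t • a ∈ P := hPsmul t htpos.le a ha
      have hb' : t • b ∈ P := hPsmul t htpos.le b hb
      have hna' : ‖t • a‖ = 1 := by
        rw [norm_smul, ht, norm_inv, norm_norm, inv_mul_cancel₀ hna.ne']
      have hsum : ‖t • a + t • b‖ = ‖a + b‖ / ‖a‖ := by
        rw [← smul_add, norm_smul, Real.norm_eq_abs, abs_of_pos htpos, ht,
          inv_mul_eq_div]
      by_cases hb2 : ‖t • b‖ ≤ 2
      · have hmem : (t • a, t • b) ∈ K :=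
          ⟨⟨ha', mem_sphere_zero_iff_norm.2 hna'⟩,
            ⟨hb', by rwa [Metric.mem_closedBall, dist_zero_right]⟩⟩
        have hle : c₀ ≤ ‖a + b‖ / ‖a‖ := by
          have := hp₀min hmem
          simpa [hsum] using this
        rw [le_div_iff₀ hna] at hle
        calc min c₀ 1 * ‖a‖ ≤ c₀ * ‖a‖ :=
              mul_le_mul_of_nonneg_right (min_le_left _ _) (norm_nonneg _)
          _ ≤ ‖a + b‖ := hle
      · push_neg at hb2
        have h1 : 1 ≤ ‖t • a + t • b‖ := by
          have h4 : ‖t • b‖ ≤ ‖t • a + t • b‖ + ‖t • a‖ := by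
            have h5 := norm_sub_le (t • a + t • b) (t • a)
            rwa [add_sub_cancel_left] at h5
          rw [hna'] at h4
          linarith
        rw [hsum, le_div_iff₀ hna, one_mul] at h1
        calc min c₀ 1 * ‖a‖ ≤ 1 * ‖a‖ :=
              mul_le_mul_of_nonneg_right (min_le_right _ _) (norm_nonneg _)
          _ = ‖a‖ := one_mul _
          _ ≤ ‖a + b‖ := h1


/-- The spectral radius of a linear endomorphism of a finite-dimensional normed real
vector space, via Gelfand's formula. -/
noncomputable def gelfandRadius {E : Type*} [NormedAddCommGroup E] [NormedSpace ℝ E]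
    [FiniteDimensional ℝ E] (T : E →ₗ[ℝ] E) : ℝ :=
  Filter.limsup (fun m : ℕ => ‖LinearMap.toContinuousLinearMap (T ^ m)‖ ^ ((1 : ℝ) / m))
    Filter.atTop

set_option maxHeartbeats 1000000 in
set_option synthInstance.maxHeartbeats 200000 in
/-- `H` models `H^{1,1}(X,ℝ)` of a compact Kähler manifold `X`, `g` is the
pullback action `g*` of a surjective endomorphism of `X`, and `P` is the closed, strictly
convex (salient), `g*`-invariant cone of classes of positive closed `(1,1)`-currents.
If `V ⊆ H^{1,1}(X,ℝ)` is a `g*`-invariant subspace containing the class `B` of a Kähler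
current (an interior point of `P`), then the first dynamical degree
`d₁(g) = ρ(g*|_{H^{1,1}})` equals the spectral radius of `g*` restricted to `V`. -/
theorem stmt_18
    (H : Type*) [NormedAddCommGroup H] [NormedSpace ℝ H] [FiniteDimensional ℝ H]
    (g : H →ₗ[ℝ] H)                  -- the pullback g* on H^{1,1}(X,ℝ)
    (P : Set H)                      -- cone of classes of positive closed (1,1)-currents
    (hPclosed : IsClosed P)
    (hPadd : ∀ a ∈ P, ∀ b ∈ P, a + b ∈ P)
    (hPsmul : ∀ t : ℝ, 0 ≤ t → ∀ a ∈ P, t • a ∈ P)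
    (hPsalient : ∀ a, a ∈ P → -a ∈ P → a = 0)     -- strictly convex
    (hPg : ∀ a ∈ P, g a ∈ P)                      -- g*-invariant
    (V : Submodule ℝ H) (hV : ∀ v ∈ V, g v ∈ V)   -- a g*-invariant subspace
    (B : H) (hBV : B ∈ V) (hB : B ∈ interior P) : -- V contains a Kähler current class
    gelfandRadius g = gelfandRadius (g.restrict hV) := by
  classical
  obtain ⟨c, hc, hcone⟩ := cone_norm_bound P hPclosed hPsmul hPsalient
  -- a ball around B inside P
  obtain ⟨ε₀, hε₀, hball₀⟩ := Metric.isOpen_iff.1 isOpen_interior B hB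
  set ε : ℝ := ε₀ / 2 with hεdef
  have hε : 0 < ε := by positivity
  have hball : Metric.closedBall B ε ⊆ P := by
    intro x hx
    apply interior_subset (hball₀ _)
    rw [Metric.mem_ball]
    calc dist x B ≤ ε := hx
      _ < ε₀ := by simp [hεdef]; linarith
  have hBP : B ∈ P := interior_subset hB
  -- powers preserve P
  have hPgn : ∀ m : ℕ, ∀ a ∈ P, (g ^ m) a ∈ P := by
    intro m
    induction m with
    | zero => intro a ha; simpa using ha
    | succ n ih =>
        intro a ha
        rw [pow_succ, Module.End.mul_apply]
        exact ih _ (hPg a ha)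
  -- restriction powers agree with powers
  have hrest : ∀ m : ℕ, ∀ x : V, (((g.restrict hV ^ m) x : V) : H) = (g ^ m) (x : H) := by
    intro m
    induction m with
    | zero => intro x; simp
    | succ n ih =>
        intro x
        rw [pow_succ, Module.End.mul_apply, pow_succ, Module.End.mul_apply,
          ih ((g.restrict hV) x)]
        rfl
  set N : ℕ → ℝ := fun m => ‖LinearMap.toContinuousLinearMap (g ^ m)‖ with hN
  set M : ℕ → ℝ := fun m => ‖LinearMap.toContinuousLinearMap (g.restrict hV ^ m)‖ with hM
  have hNnn : ∀ m, 0 ≤ N m := by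
    intro m
    simp only [hN]
    exact norm_nonneg _
  have hMnn : ∀ m, 0 ≤ M m := by
    intro m
    simp only [hM]
    exact norm_nonneg (LinearMap.toContinuousLinearMap (g.restrict hV ^ m))
  -- M ≤ N
  have hMN : ∀ m, M m ≤ N m := by
    intro m
    have hNnn' := hNnn m
    simp only [hM, hN] at *
    apply ContinuousLinearMap.opNorm_le_bound _ hNnn'
    intro x
    rw [LinearMap.coe_toContinuousLinearMap']
    have h1 : ‖(g.restrict hV ^ m) x‖ = ‖(g ^ m) (x : H)‖ := by
      rw [← hrest m x]; rfl
    rw [h1]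
    have := (LinearMap.toContinuousLinearMap (g ^ m)).le_opNorm (x : H)
    rw [LinearMap.coe_toContinuousLinearMap'] at this
    simpa using this
  -- the key bound : N m ≤ K * ‖g^m B‖
  set K : ℝ := (2 / c + 1) / ε with hKdef
  have hKpos : 0 < K := by positivity
  have hkey : ∀ m : ℕ, N m ≤ K * ‖(g ^ m) B‖ := by
    intro m
    simp only [hN]
    set T : H →ₗ[ℝ] H := g ^ m with hT
    apply ContinuousLinearMap.opNorm_le_bound _ (by positivity)
    intro x
    rw [LinearMap.coe_toContinuousLinearMap']
    rcases eq_or_ne x 0 with rfl | hx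
    · simp
    · have hnx : 0 < ‖x‖ := norm_pos_iff.2 hx
      set y : H := (ε / ‖x‖) • x with hy
      have hny : ‖y‖ = ε := by
        rw [hy, norm_smul, Real.norm_eq_abs, abs_of_pos (by positivity), div_mul_cancel₀ _ hnx.ne']
      have hBy : B + y ∈ P := by
        apply hball
        rw [Metric.mem_closedBall, dist_eq_norm, add_sub_cancel_left, hny]
      have hBy' : B - y ∈ P := by
        apply hball
        rw [Metric.mem_closedBall, dist_eq_norm, sub_sub_cancel_left, norm_neg, hny]
      have hTBy : T (B + y) ∈ P := hPgn m _ hBy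
      have hTBy' : T (B - y) ∈ P := hPgn m _ hBy'
      have hsum : T (B + y) + T (B - y) = T B + T B := by
        rw [← map_add, ← map_add]
        congr 1
        abel
      have h1 : c * ‖T (B + y)‖ ≤ ‖T B + T B‖ := by
        have := hcone _ hTBy _ hTBy'
        rwa [hsum] at this
      have h2 : ‖T (B + y)‖ ≤ (2 / c) * ‖T B‖ := by
        have h3 : ‖T B + T B‖ ≤ 2 * ‖T B‖ := by
          calc ‖T B + T B‖ ≤ ‖T B‖ + ‖T B‖ := norm_add_le _ _
            _ = 2 * ‖T B‖ := by ring
        rw [div_mul_eq_mul_div, le_div_iff₀ hc, mul_comm]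
        linarith
      have h4 : ‖T y‖ ≤ (2 / c + 1) * ‖T B‖ := by
        have : T y = T (B + y) - T B := by rw [map_add]; abel
        rw [this]
        calc ‖T (B + y) - T B‖ ≤ ‖T (B + y)‖ + ‖T B‖ := norm_sub_le _ _
          _ ≤ (2 / c) * ‖T B‖ + ‖T B‖ := by linarith
          _ = (2 / c + 1) * ‖T B‖ := by ring
      have hx_y : T x = (‖x‖ / ε) • T y := by
        rw [← map_smul]
        congr 1
        rw [hy, smul_smul]
        rw [div_mul_div_comm, mul_comm ‖x‖ ε, ← div_mul_div_comm, div_self hε.ne',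
          div_self hnx.ne', one_mul, one_smul]
      rw [hx_y, norm_smul, Real.norm_eq_abs, abs_of_pos (by positivity)]
      calc ‖x‖ / ε * ‖T y‖ ≤ ‖x‖ / ε * ((2 / c + 1) * ‖T B‖) := by
            apply mul_le_mul_of_nonneg_left h4 (by positivity)
        _ = K * ‖T B‖ * ‖x‖ := by rw [hKdef]; ring
  -- ‖g^m B‖ ≤ M m * ‖B‖
  have hgmB : ∀ m : ℕ, ‖(g ^ m) B‖ ≤ M m * ‖B‖ := by
    intro m
    have h1 : (g ^ m) B = (((g.restrict hV ^ m) ⟨B, hBV⟩ : V) : H) := (hrest m ⟨B, hBV⟩).symm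
    rw [h1]
    have h2 := (LinearMap.toContinuousLinearMap (g.restrict hV ^ m)).le_opNorm ⟨B, hBV⟩
    rw [LinearMap.coe_toContinuousLinearMap'] at h2
    simpa using h2
  -- combined : N m ≤ K' * M m with K' ≥ 1
  set K' : ℝ := max (K * ‖B‖) 1 with hK'
  have hK'1 : 1 ≤ K' := le_max_right _ _
  have hK'pos : 0 < K' := lt_of_lt_of_le one_pos hK'1
  have hNM : ∀ m, N m ≤ K' * M m := by
    intro m
    calc N m ≤ K * ‖(g ^ m) B‖ := hkey m
      _ ≤ K * (M m * ‖B‖) := mul_le_mul_of_nonneg_left (hgmB m) hKpos.le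
      _ = (K * ‖B‖) * M m := by ring
      _ ≤ K' * M m := mul_le_mul_of_nonneg_right (le_max_left _ _) (hMnn m)
  -- the sequences
  set A : ℕ → ℝ := fun m => N m ^ ((1 : ℝ) / m) with hA
  set Bs : ℕ → ℝ := fun m => M m ^ ((1 : ℝ) / m) with hBs
  have hAnn : ∀ m, 0 ≤ A m := fun m => Real.rpow_nonneg (hNnn m) _
  have hBsnn : ∀ m, 0 ≤ Bs m := fun m => Real.rpow_nonneg (hMnn m) _
  -- pointwise comparisons
  have hBsA : ∀ m, Bs m ≤ A m := fun m =>
    Real.rpow_le_rpow (hMnn m) (hMN m) (by positivity)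
  have hABs : ∀ m, A m ≤ K' ^ ((1 : ℝ) / m) * Bs m := by
    intro m
    calc A m ≤ (K' * M m) ^ ((1 : ℝ) / m) :=
          Real.rpow_le_rpow (hNnn m) (hNM m) (by positivity)
      _ = K' ^ ((1 : ℝ) / m) * Bs m := Real.mul_rpow hK'pos.le (hMnn m)
  -- boundedness of A (and hence Bs)
  set C1 : ℝ := max ‖LinearMap.toContinuousLinearMap g‖ 1 with hC1
  have hC1one : 1 ≤ C1 := le_max_right _ _
  have hC1pos : 0 < C1 := lt_of_lt_of_le one_pos hC1one
  have hNptwise : ∀ m : ℕ, ∀ x : H, ‖(g ^ m) x‖ ≤ C1 ^ m * ‖x‖ := by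
    intro m
    induction m with
    | zero => intro x; simp
    | succ n ih =>
        intro x
        rw [pow_succ, Module.End.mul_apply]
        calc ‖(g ^ n) (g x)‖ ≤ C1 ^ n * ‖g x‖ := ih (g x)
          _ ≤ C1 ^ n * (C1 * ‖x‖) := by
              apply mul_le_mul_of_nonneg_left _ (by positivity)
              have := (LinearMap.toContinuousLinearMap g).le_opNorm x
              rw [LinearMap.coe_toContinuousLinearMap'] at this
              calc ‖g x‖ ≤ ‖LinearMap.toContinuousLinearMap g‖ * ‖x‖ := this
                _ ≤ C1 * ‖x‖ := mul_le_mul_of_nonneg_right (le_max_left _ _) (norm_nonneg _)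
          _ = C1 ^ (n + 1) * ‖x‖ := by ring
  have hNC1 : ∀ m, N m ≤ C1 ^ m := by
    intro m
    simp only [hN]
    apply ContinuousLinearMap.opNorm_le_bound _ (by positivity)
    intro x
    rw [LinearMap.coe_toContinuousLinearMap']
    exact hNptwise m x
  have hAC1 : ∀ m, A m ≤ C1 := by
    intro m
    rcases Nat.eq_zero_or_pos m with rfl | hm
    · simp [hA]
      exact hC1one
    · calc A m ≤ (C1 ^ m) ^ ((1 : ℝ) / m) :=
            Real.rpow_le_rpow (hNnn m) (hNC1 m) (by positivity)
        _ = C1 ^ ((m : ℝ) * ((1 : ℝ) / m)) := by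
            rw [← Real.rpow_natCast C1 m, ← Real.rpow_mul hC1pos.le]
        _ = C1 := by
            rw [mul_one_div, div_self (by exact_mod_cast hm.ne' : (m : ℝ) ≠ 0), Real.rpow_one]
  have hBsC1 : ∀ m, Bs m ≤ C1 := fun m => le_trans (hBsA m) (hAC1 m)
  -- limsup setup
  have hAbdd : IsBoundedUnder (· ≤ ·) atTop A := isBoundedUnder_of ⟨C1, hAC1⟩
  have hBsbdd : IsBoundedUnder (· ≤ ·) atTop Bs := isBoundedUnder_of ⟨C1, hBsC1⟩
  have hAcob : IsCoboundedUnder (· ≤ ·) atTop A :=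
    isCoboundedUnder_le_of_le atTop hAnn
  have hBscob : IsCoboundedUnder (· ≤ ·) atTop Bs :=
    isCoboundedUnder_le_of_le atTop hBsnn
  have hdir1 : limsup Bs atTop ≤ limsup A atTop :=
    limsup_le_limsup (Eventually.of_forall hBsA) hBscob hAbdd
  -- LB ≥ 0
  set LB : ℝ := limsup Bs atTop with hLB
  have hLBnn : 0 ≤ LB :=
    le_limsup_of_frequently_le (Frequently.of_forall hBsnn) hBsbdd
  -- tendsto K'^(1/m) → 1
  have htends : Tendsto (fun m : ℕ => K' ^ ((1 : ℝ) / m)) atTop (nhds 1) := by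
    have heq : (fun m : ℕ => K' ^ ((1 : ℝ) / m)) =
        fun m : ℕ => Real.exp (Real.log K' * (1 / m)) := by
      funext m
      rw [Real.rpow_def_of_pos hK'pos]
    rw [heq]
    have h0 : Tendsto (fun m : ℕ => Real.log K' * (1 / (m : ℝ))) atTop (nhds 0) := by
      have := tendsto_one_div_atTop_nhds_zero_nat.const_mul (Real.log K')
      simpa using this
    have := (Real.continuous_exp.tendsto 0).comp h0
    simpa [Function.comp_def] using this
  -- dir 2
  have hdir2 : limsup A atTop ≤ LB := by
    apply le_of_forall_pos_le_add
    intro ε' hε'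
    set δ : ℝ := min 1 (ε' / (LB + 2)) with hδ
    have hδpos : 0 < δ := lt_min one_pos (by positivity)
    have hδ1 : δ ≤ 1 := min_le_left _ _
    have hδ2 : δ * (LB + 2) ≤ ε' := by
      rw [← le_div_iff₀ (by linarith : (0:ℝ) < LB + 2)]
      exact min_le_right _ _
    have hev1 : ∀ᶠ m : ℕ in atTop, K' ^ ((1 : ℝ) / m) ≤ 1 + δ :=
      htends.eventually_le_const (by linarith)
    have hev2 : ∀ᶠ m in atTop, Bs m < LB + δ :=
      eventually_lt_of_limsup_lt (by rw [← hLB]; linarith) hBsbdd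
    have hev : ∀ᶠ m in atTop, A m ≤ (1 + δ) * (LB + δ) := by
      filter_upwards [hev1, hev2] with m h1 h2
      calc A m ≤ K' ^ ((1 : ℝ) / m) * Bs m := hABs m
        _ ≤ (1 + δ) * (LB + δ) := by
            apply mul_le_mul h1 h2.le (hBsnn m) (by linarith)
    have hle := limsup_le_of_le hAcob hev
    calc limsup A atTop ≤ (1 + δ) * (LB + δ) := hle
      _ ≤ LB + ε' := by nlinarith
  exact le_antisymm hdir2 hdir1
end

section
/- Let V be a finite-dimensional real vector space, C ⊆ V a closed strictly convex cone with nonempty interior (i.e., C ∩ (−C) = {0} and C spans V), and T : V → V a linear map with T(C) ⊆ C. If B is an interior point of C and χ : V → ℝ is a linear functional that is strictly positive on C ∖ {0}, then the spectral radius of T equals lim_{m→∞} χ(Tᵐ B)^{1/m}. -/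
open Filter Real


lemma aux_rpow_one_div_tendsto_one {c : ℝ} (hc : 0 < c) :
    Tendsto (fun n : ℕ => c ^ ((1:ℝ)/n)) atTop (nhds 1) := by
  have h1 : Tendsto (fun n : ℕ => (1:ℝ)/n) atTop (nhds 0) :=
    tendsto_one_div_atTop_nhds_zero_nat
  have := (tendsto_const_nhds : Tendsto (fun _ : ℕ => c) atTop (nhds c)).rpow h1
    (Or.inl (ne_of_gt hc))
  simpa using this

lemma aux_div_div_tendsto (m : ℕ) (hm : 0 < m) :
    Tendsto (fun n : ℕ => ((n / m : ℕ) : ℝ) / (n : ℝ)) atTop (nhds ((1:ℝ)/m)) := by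
  have hmod : Tendsto (fun n : ℕ => ((n % m : ℕ) : ℝ) / (n : ℝ)) atTop (nhds 0) := by
    apply squeeze_zero (fun n => by positivity) (g := fun n : ℕ => (m : ℝ) / n)
    · intro n
      rcases Nat.eq_zero_or_pos n with h | h
      · simp [h]
      · have h1 : ((n % m : ℕ) : ℝ) ≤ (m : ℝ) := by
          exact_mod_cast (Nat.mod_lt n hm).le
        have h2 : (0:ℝ) < (n : ℝ) := by exact_mod_cast h
        exact div_le_div_of_nonneg_right h1 h2.le |>.trans_eq rfl
    · exact tendsto_const_div_atTop_nhds_zero_nat (m : ℝ)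
  have key : ∀ᶠ n : ℕ in atTop,
      (1/(m:ℝ)) * (1 - ((n % m : ℕ):ℝ)/n) = ((n / m : ℕ) : ℝ) / n := by
    filter_upwards [eventually_ge_atTop 1] with n hn
    have hn0 : (n:ℝ) ≠ 0 := (Nat.cast_pos.mpr hn).ne'
    have hm0 : (m:ℝ) ≠ 0 := (Nat.cast_pos.mpr hm).ne'
    have hdm : (m:ℝ) * ((n/m : ℕ):ℝ) + ((n % m : ℕ):ℝ) = n := by
      exact_mod_cast congrArg (Nat.cast : ℕ → ℝ) (Nat.div_add_mod n m)
    field_simp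
    linear_combination (-1:ℝ) * hdm
  have h2 : Tendsto (fun n : ℕ => (1/(m:ℝ)) * (1 - ((n % m : ℕ):ℝ)/n)) atTop
      (nhds ((1/(m:ℝ)) * (1 - 0))) := tendsto_const_nhds.mul (tendsto_const_nhds.sub hmod)
  rw [show ((1:ℝ)/m) * (1 - 0) = 1/(m:ℝ) by ring] at h2
  exact h2.congr' key

lemma fekete_mul (g : ℕ → ℝ) (hpos : ∀ n, 0 < g n) (hsub : ∀ m n, g (m + n) ≤ g m * g n) :
    ∃ L, Tendsto (fun n : ℕ => g n ^ ((1:ℝ)/n)) atTop (nhds L) := by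
  set a : ℕ → ℝ := fun n => g n ^ ((1:ℝ)/n) with ha
  have hapos : ∀ n, 0 < a n := fun n => Real.rpow_pos_of_pos (hpos n) _
  have hbdd : BddBelow (Set.range fun m : ℕ => a (m+1)) := by
    refine ⟨0, ?_⟩
    rintro x ⟨m, rfl⟩
    exact (hapos (m+1)).le
  set L := ⨅ m : ℕ, a (m+1) with hL
  refine ⟨L, ?_⟩
  have hLle : ∀ m, 0 < m → L ≤ a m := by
    intro m hm
    have := ciInf_le hbdd (m - 1)
    rwa [Nat.sub_add_cancel hm] at this
  -- key : for each m ≥ 1 and b > a m, eventually a n < b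
  have key : ∀ m, 0 < m → ∀ b, a m < b → ∀ᶠ n : ℕ in atTop, a n < b := by
    intro m hm b hb
    set G : ℝ := 1 + ∑ r ∈ Finset.range m, g r with hG
    have hG1 : (1:ℝ) ≤ G := by
      have : (0:ℝ) ≤ ∑ r ∈ Finset.range m, g r :=
        Finset.sum_nonneg fun r _ => (hpos r).le
      linarith
    have hGpos : (0:ℝ) < G := lt_of_lt_of_le one_pos hG1
    have hGr : ∀ r, r < m → g r ≤ G := by
      intro r hr
      have h1 : g r ≤ ∑ r ∈ Finset.range m, g r :=
        Finset.single_le_sum (fun i _ => (hpos i).le) (Finset.mem_range.mpr hr)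
      linarith
    have hpow : ∀ q r : ℕ, g (m * q + r) ≤ g m ^ q * g r := by
      intro q
      induction q with
      | zero => intro r; simp
      | succ q ih =>
        intro r
        have h1 : m * (q+1) + r = m + (m * q + r) := by ring
        rw [h1]
        calc g (m + (m * q + r)) ≤ g m * g (m * q + r) := hsub m _
          _ ≤ g m * (g m ^ q * g r) := by
              apply mul_le_mul_of_nonneg_left (ih r) (hpos m).le
          _ = g m ^ (q+1) * g r := by ring
    -- bound sequence
    set bnd : ℕ → ℝ := fun n => g m ^ (((n / m : ℕ):ℝ)/n) * G ^ ((1:ℝ)/n) with hbnd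
    have hbound : ∀ n : ℕ, 1 ≤ n → a n ≤ bnd n := by
      intro n hn
      have h1 : g n ≤ g m ^ (n / m) * g (n % m) := by
        have := hpow (n / m) (n % m)
        rwa [Nat.div_add_mod] at this
      have h2 : a n ≤ (g m ^ (n / m) * g (n % m)) ^ ((1:ℝ)/n) :=
        Real.rpow_le_rpow (hpos n).le h1 (by positivity)
      have h3 : (g m ^ (n / m) * g (n % m)) ^ ((1:ℝ)/n)
          = (g m ^ (n / m) : ℝ) ^ ((1:ℝ)/n) * (g (n % m)) ^ ((1:ℝ)/n) :=
        Real.mul_rpow (pow_nonneg (hpos m).le _) (hpos _).le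
      have h4 : (g m ^ (n / m) : ℝ) ^ ((1:ℝ)/n) = g m ^ (((n / m : ℕ):ℝ)/n) := by
        rw [← Real.rpow_natCast (g m) (n / m), ← Real.rpow_mul (hpos m).le, mul_one_div]
      have h5 : (g (n % m)) ^ ((1:ℝ)/n) ≤ G ^ ((1:ℝ)/n) :=
        Real.rpow_le_rpow (hpos _).le (hGr _ (Nat.mod_lt n hm)) (by positivity)
      calc a n ≤ (g m ^ (n / m) : ℝ) ^ ((1:ℝ)/n) * (g (n % m)) ^ ((1:ℝ)/n) := by
            rw [← h3]; exact h2
        _ ≤ g m ^ (((n / m : ℕ):ℝ)/n) * G ^ ((1:ℝ)/n) := by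
            rw [h4]
            exact mul_le_mul_of_nonneg_left h5 (Real.rpow_nonneg (hpos m).le _)
    have htend : Tendsto bnd atTop (nhds (g m ^ ((1:ℝ)/m) * 1)) := by
      apply Tendsto.mul
      · exact (tendsto_const_nhds (x := g m)).rpow (aux_div_div_tendsto m hm)
          (Or.inl (hpos m).ne')
      · exact aux_rpow_one_div_tendsto_one hGpos
    rw [mul_one] at htend
    have hev : ∀ᶠ n : ℕ in atTop, bnd n < b := htend.eventually_lt_const hb
    filter_upwards [hev, eventually_ge_atTop 1] with n h1 h2
    exact lt_of_le_of_lt (hbound n h2) h1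
  rw [tendsto_order]
  constructor
  · intro b hbL
    filter_upwards [eventually_ge_atTop 1] with n hn
    exact lt_of_lt_of_le hbL (hLle n hn)
  · intro b hLb
    obtain ⟨m, hm⟩ := exists_lt_of_ciInf_lt hLb
    exact key (m+1) (Nat.succ_pos m) b hm


/-- cone Perron–Frobenius, cf. [NZ09, Prop. A.2]: let `V` be a
finite-dimensional real vector space, `C ⊆ V` a closed strictly convex full-dimensional
cone, `T : V → V` linear with `T(C) ⊆ C`, `B` an interior point of `C`, and `χ` a linear
functional strictly positive on `C \ {0}`.  Then the spectral radius of `T` equals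
`lim_{m→∞} χ(Tᵐ B)^{1/m}`. -/
theorem stmt_19
    (V : Type*) [NormedAddCommGroup V] [NormedSpace ℝ V] [FiniteDimensional ℝ V]
    (C : Set V)
    (hCclosed : IsClosed C)
    (hCadd : ∀ a ∈ C, ∀ b ∈ C, a + b ∈ C)
    (hCsmul : ∀ t : ℝ, 0 ≤ t → ∀ a ∈ C, t • a ∈ C)
    (hCsalient : ∀ a, a ∈ C → -a ∈ C → a = 0)       -- C ∩ (-C) = {0}
    (hCspan : Submodule.span ℝ C = ⊤)               -- C spans V
    (T : V →ₗ[ℝ] V) (hT : ∀ a ∈ C, T a ∈ C)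
    (B : V) (hB : B ∈ interior C)
    (χ : V →ₗ[ℝ] ℝ) (hχ : ∀ v ∈ C, v ≠ 0 → 0 < χ v) :
    Filter.Tendsto (fun m : ℕ => (χ ((T ^ m) B)) ^ ((1 : ℝ) / m)) Filter.atTop
      (nhds (gelfandRadius T)) := by
  classical
  have hχc : Continuous χ := LinearMap.continuous_of_finiteDimensional χ
  have hBC : B ∈ C := interior_subset hB
  have hTpow : ∀ m : ℕ, ∀ a ∈ C, (T ^ m) a ∈ C := by
    intro m
    induction m with
    | zero => intro a ha; simpa using ha
    | succ n ih =>
      intro a ha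
      rw [pow_succ, Module.End.mul_apply]
      exact ih _ (hT a ha)
  have hχ0 : ∀ v ∈ C, 0 ≤ χ v := by
    intro v hv
    rcases eq_or_ne v 0 with rfl | hne
    · simp
    · exact (hχ v hv hne).le
  -- interior ball
  obtain ⟨ε₀, hε₀pos, hball⟩ : ∃ ε > 0, Metric.ball B ε ⊆ C :=
    Metric.mem_nhds_iff.mp (mem_interior_iff_mem_nhds.mp hB)
  set ε : ℝ := ε₀ / 2 with hεdef
  have hε : 0 < ε := by positivity
  have hballε : ∀ w : V, ‖w‖ ≤ ε → B + w ∈ C := by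
    intro w hw
    apply hball
    rw [Metric.mem_ball, dist_eq_norm, add_sub_cancel_left]
    linarith
  -- δ with δ‖v‖ ≤ χ v on C
  obtain ⟨δ, hδpos, hδ⟩ : ∃ δ : ℝ, 0 < δ ∧ ∀ v ∈ C, δ * ‖v‖ ≤ χ v := by
    by_cases hK : (C ∩ Metric.sphere 0 1).Nonempty
    · have hKcpt : IsCompact (C ∩ Metric.sphere 0 1) :=
        (isCompact_sphere (0:V) 1).inter_left hCclosed
      obtain ⟨v₀, hv₀K, hmin⟩ := hKcpt.exists_isMinOn hK hχc.continuousOn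
      have hv₀n : ‖v₀‖ = 1 := by simpa using hv₀K.2
      have hv₀ne : v₀ ≠ 0 := by intro h; rw [h] at hv₀n; simp at hv₀n
      refine ⟨χ v₀, hχ v₀ hv₀K.1 hv₀ne, ?_⟩
      intro v hv
      rcases eq_or_ne v 0 with rfl | hne
      · simp
      · have hvn : (0:ℝ) < ‖v‖ := norm_pos_iff.mpr hne
        have hw : ‖v‖⁻¹ • v ∈ C ∩ Metric.sphere 0 1 := by
          constructor
          · exact hCsmul _ (by positivity) v hv
          · simp [norm_smul, abs_of_pos (inv_pos.mpr hvn), inv_mul_cancel₀ hvn.ne']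
        have hle : χ v₀ ≤ χ (‖v‖⁻¹ • v) := hmin hw
        have h2 : χ (‖v‖⁻¹ • v) = ‖v‖⁻¹ * χ v := by simp
        rw [h2] at hle
        have h3 : ‖v‖ * (‖v‖⁻¹ * χ v) = χ v := by field_simp
        nlinarith [mul_le_mul_of_nonneg_left hle hvn.le]
    · refine ⟨1, one_pos, ?_⟩
      intro v hv
      rcases eq_or_ne v 0 with rfl | hne
      · simp
      · exfalso
        apply hK
        have hvn : (0:ℝ) < ‖v‖ := norm_pos_iff.mpr hne
        refine ⟨‖v‖⁻¹ • v, hCsmul _ (by positivity) v hv, ?_⟩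
        simp [norm_smul, abs_of_pos (inv_pos.mpr hvn), inv_mul_cancel₀ hvn.ne']
  have hf0 : ∀ m : ℕ, 0 ≤ χ ((T ^ m) B) := fun m => hχ0 _ (hTpow m B hBC)
  -- key bound I
  have h7 : ∀ m : ℕ, ∀ v : V, ‖v‖ ≤ 1 → |χ ((T ^ m) v)| ≤ ε⁻¹ * χ ((T ^ m) B) := by
    intro m v hv
    have hsm : ∀ u : V, ‖u‖ ≤ 1 → ‖ε • u‖ ≤ ε := by
      intro u hu
      rw [norm_smul, Real.norm_eq_abs, abs_of_pos hε]
      nlinarith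
    have h1 : 0 ≤ χ ((T ^ m) (B + ε • v)) := hχ0 _ (hTpow m _ (hballε _ (hsm v hv)))
    have h2 : 0 ≤ χ ((T ^ m) (B + ε • (-v))) := by
      refine hχ0 _ (hTpow m _ (hballε _ ?_))
      have h : ‖(-v : V)‖ ≤ 1 := by rwa [norm_neg]
      exact hsm _ h
    have e1 : χ ((T ^ m) (B + ε • v)) = χ ((T ^ m) B) + ε * χ ((T ^ m) v) := by
      simp [map_add, map_smul]
    have e2 : χ ((T ^ m) (B + ε • (-v))) = χ ((T ^ m) B) - ε * χ ((T ^ m) v) := by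
      simp [map_add, map_smul]; ring
    rw [e1] at h1
    rw [e2] at h2
    rw [abs_le]
    constructor
    · rw [neg_le, inv_mul_eq_div, le_div_iff₀ hε]
      linarith
    · rw [inv_mul_eq_div, le_div_iff₀ hε]
      linarith
  -- key bound II
  have h8 : ∀ m : ℕ, ∀ v : V, ‖v‖ ≤ 1 →
      ‖(T ^ m) v‖ ≤ 3 * (ε⁻¹ * δ⁻¹) * χ ((T ^ m) B) := by
    intro m v hv
    have hεv : ‖ε • v‖ ≤ ε := by
      rw [norm_smul, Real.norm_eq_abs, abs_of_pos hε]
      nlinarith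
    have hmem : B + ε • v ∈ C := hballε _ hεv
    have hA : δ * ‖(T ^ m) (B + ε • v)‖ ≤ χ ((T ^ m) (B + ε • v)) := hδ _ (hTpow m _ hmem)
    have e1 : χ ((T ^ m) (B + ε • v)) = χ ((T ^ m) B) + ε * χ ((T ^ m) v) := by
      simp [map_add, map_smul]
    have h71 : χ ((T ^ m) v) ≤ ε⁻¹ * χ ((T ^ m) B) := (abs_le.mp (h7 m v hv)).2
    have hB2 : δ * ‖(T ^ m) B‖ ≤ χ ((T ^ m) B) := hδ _ (hTpow m B hBC)
    have hAB : χ ((T ^ m) (B + ε • v)) ≤ 2 * χ ((T ^ m) B) := by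
      rw [e1]
      have h := mul_le_mul_of_nonneg_left h71 hε.le
      rw [← mul_assoc, mul_inv_cancel₀ hε.ne', one_mul] at h
      linarith
    have hid : (T ^ m) v = ε⁻¹ • ((T ^ m) (B + ε • v) - (T ^ m) B) := by
      rw [map_add, map_smul, add_sub_cancel_left, smul_smul, inv_mul_cancel₀ hε.ne',
        one_smul]
    have hnv : ‖(T ^ m) v‖ ≤ ε⁻¹ * (‖(T ^ m) (B + ε • v)‖ + ‖(T ^ m) B‖) := by
      rw [hid, norm_smul, Real.norm_eq_abs, abs_of_pos (inv_pos.mpr hε)]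
      exact mul_le_mul_of_nonneg_left (norm_sub_le _ _) (inv_pos.mpr hε).le
    have hA' : ‖(T ^ m) (B + ε • v)‖ ≤ δ⁻¹ * (2 * χ ((T ^ m) B)) := by
      have h := mul_le_mul_of_nonneg_left (le_trans hA hAB) (inv_pos.mpr hδpos).le
      rwa [← mul_assoc, inv_mul_cancel₀ hδpos.ne', one_mul] at h
    have hB' : ‖(T ^ m) B‖ ≤ δ⁻¹ * χ ((T ^ m) B) := by
      have h := mul_le_mul_of_nonneg_left hB2 (inv_pos.mpr hδpos).le
      rwa [← mul_assoc, inv_mul_cancel₀ hδpos.ne', one_mul] at h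
    have hsum := mul_le_mul_of_nonneg_left (add_le_add hA' hB') (inv_pos.mpr hε).le
    calc ‖(T ^ m) v‖ ≤ ε⁻¹ * (‖(T ^ m) (B + ε • v)‖ + ‖(T ^ m) B‖) := hnv
      _ ≤ ε⁻¹ * (δ⁻¹ * (2 * χ ((T ^ m) B)) + δ⁻¹ * χ ((T ^ m) B)) := hsum
      _ = 3 * (ε⁻¹ * δ⁻¹) * χ ((T ^ m) B) := by ring
  -- lower bound on operator norm
  have h9 : ∀ m : ℕ, ‖LinearMap.toContinuousLinearMap (T ^ m)‖
      ≤ 3 * (ε⁻¹ * δ⁻¹) * χ ((T ^ m) B) := by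
    intro m
    apply ContinuousLinearMap.opNorm_le_bound
    · exact mul_nonneg (by positivity) (hf0 m)
    · intro v
      rcases eq_or_ne v 0 with rfl | hne
      · simp
      · have hvn : (0:ℝ) < ‖v‖ := norm_pos_iff.mpr hne
        have hw : ‖(‖v‖⁻¹ • v)‖ ≤ 1 := by
          rw [norm_smul, Real.norm_eq_abs, abs_of_pos (inv_pos.mpr hvn),
            inv_mul_cancel₀ hvn.ne']
        have h8' := h8 m _ hw
        rw [map_smul, norm_smul, Real.norm_eq_abs, abs_of_pos (inv_pos.mpr hvn)] at h8'
        have h := mul_le_mul_of_nonneg_left h8' hvn.le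
        rw [← mul_assoc, mul_inv_cancel₀ hvn.ne', one_mul] at h
        rw [LinearMap.coe_toContinuousLinearMap']
        calc ‖(T ^ m) v‖ ≤ ‖v‖ * (3 * (ε⁻¹ * δ⁻¹) * χ ((T ^ m) B)) := h
          _ = 3 * (ε⁻¹ * δ⁻¹) * χ ((T ^ m) B) * ‖v‖ := by ring
  -- upper bound via operator norm
  have h6 : ∀ m : ℕ, χ ((T ^ m) B)
      ≤ (‖LinearMap.toContinuousLinearMap χ‖ * ‖B‖ + 1)
        * ‖LinearMap.toContinuousLinearMap (T ^ m)‖ := by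
    intro m
    have h1 : χ ((T ^ m) B) ≤ |χ ((T ^ m) B)| := le_abs_self _
    have h2 : |χ ((T ^ m) B)| = ‖(LinearMap.toContinuousLinearMap χ) ((T ^ m) B)‖ := by
      rw [LinearMap.coe_toContinuousLinearMap', Real.norm_eq_abs]
    have h3 := (LinearMap.toContinuousLinearMap χ).le_opNorm ((T ^ m) B)
    have h4 : ‖(T ^ m) B‖ ≤ ‖LinearMap.toContinuousLinearMap (T ^ m)‖ * ‖B‖ := by
      have := (LinearMap.toContinuousLinearMap (T ^ m)).le_opNorm B
      rwa [LinearMap.coe_toContinuousLinearMap'] at this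
    have h5 := mul_le_mul_of_nonneg_left h4 (norm_nonneg (LinearMap.toContinuousLinearMap χ))
    nlinarith [norm_nonneg (LinearMap.toContinuousLinearMap (T ^ m))]
  -- case split on nilpotency
  by_cases hnil : ∀ m : ℕ, ‖LinearMap.toContinuousLinearMap (T ^ m)‖ ≠ 0
  · -- non-degenerate case
    have hgpos : ∀ m : ℕ, 0 < ‖LinearMap.toContinuousLinearMap (T ^ m)‖ :=
      fun m => lt_of_le_of_ne (norm_nonneg _) (Ne.symm (hnil m))
    have hsubm : ∀ m n : ℕ, ‖LinearMap.toContinuousLinearMap (T ^ (m + n))‖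
        ≤ ‖LinearMap.toContinuousLinearMap (T ^ m)‖ * ‖LinearMap.toContinuousLinearMap (T ^ n)‖ := by
      intro m n
      have hco : LinearMap.toContinuousLinearMap (T ^ (m + n))
          = (LinearMap.toContinuousLinearMap (T ^ m)).comp
            (LinearMap.toContinuousLinearMap (T ^ n)) := by
        ext x
        simp [pow_add, Module.End.mul_apply]
      rw [hco]
      exact ContinuousLinearMap.opNorm_comp_le _ _
    obtain ⟨L, hL⟩ := fekete_mul (fun m => ‖LinearMap.toContinuousLinearMap (T ^ m)‖)
      hgpos hsubm
    have hgel : gelfandRadius T = L := by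
      unfold gelfandRadius
      exact hL.limsup_eq
    rw [hgel]
    have hc1 : (0:ℝ) < ε * δ / 3 := by positivity
    have hc2 : (0:ℝ) < ‖LinearMap.toContinuousLinearMap χ‖ * ‖B‖ + 1 := by positivity
    have hlow : Tendsto (fun n : ℕ => (ε * δ / 3) ^ ((1:ℝ)/n)
        * ‖LinearMap.toContinuousLinearMap (T ^ n)‖ ^ ((1:ℝ)/n)) atTop (nhds (1 * L)) :=
      (aux_rpow_one_div_tendsto_one hc1).mul hL
    have hup : Tendsto (fun n : ℕ => (‖LinearMap.toContinuousLinearMap χ‖ * ‖B‖ + 1) ^ ((1:ℝ)/n)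
        * ‖LinearMap.toContinuousLinearMap (T ^ n)‖ ^ ((1:ℝ)/n)) atTop (nhds (1 * L)) :=
      (aux_rpow_one_div_tendsto_one hc2).mul hL
    rw [one_mul] at hlow hup
    apply tendsto_of_tendsto_of_tendsto_of_le_of_le' hlow hup
    · filter_upwards [eventually_ge_atTop 1] with n hn
      have hkey : (ε * δ / 3) * (3 * (ε⁻¹ * δ⁻¹)) = 1 := by
        field_simp
      have hle : (ε * δ / 3) * ‖LinearMap.toContinuousLinearMap (T ^ n)‖ ≤ χ ((T ^ n) B) := by
        have h := mul_le_mul_of_nonneg_left (h9 n) hc1.le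
        rwa [← mul_assoc, hkey, one_mul] at h
      rw [← Real.mul_rpow hc1.le (norm_nonneg _)]
      exact Real.rpow_le_rpow (mul_nonneg hc1.le (norm_nonneg _)) hle (by positivity)
    · filter_upwards [eventually_ge_atTop 1] with n hn
      rw [← Real.mul_rpow hc2.le (norm_nonneg _)]
      exact Real.rpow_le_rpow (hf0 n) (h6 n) (by positivity)
  · -- eventually nilpotent case
    push_neg at hnil
    obtain ⟨m₀, hm₀⟩ := hnil
    have hTz : ∀ x : V, (T ^ m₀) x = 0 := by
      intro x
      have h0 : LinearMap.toContinuousLinearMap (T ^ m₀) = 0 := norm_eq_zero.mp hm₀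
      have h1 := congrArg (fun A : V →L[ℝ] V => A x) h0
      simpa using h1
    have hk0 : ∀ k : ℕ, m₀ ≤ k → ∀ x : V, (T ^ k) x = 0 := by
      intro k hk x
      have h : T ^ k = T ^ (k - m₀) * T ^ m₀ := by
        rw [← pow_add, Nat.sub_add_cancel hk]
      rw [h, Module.End.mul_apply, hTz, map_zero]
    have hgl : gelfandRadius T = 0 := by
      unfold gelfandRadius
      have hev : ∀ᶠ k : ℕ in atTop,
          ‖LinearMap.toContinuousLinearMap (T ^ k)‖ ^ ((1:ℝ)/k) = (0:ℝ) := by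
        filter_upwards [eventually_ge_atTop (max m₀ 1)] with k hk
        have hk1 : 1 ≤ k := le_trans (le_max_right _ _) hk
        have hkm : m₀ ≤ k := le_trans (le_max_left _ _) hk
        have h0 : LinearMap.toContinuousLinearMap (T ^ k) = 0 := by
          ext x
          simp [hk0 k hkm x]
        rw [h0, norm_zero, Real.zero_rpow]
        exact one_div_ne_zero (Nat.cast_ne_zero.mpr (by omega))
      rw [Filter.limsup_congr hev, Filter.limsup_const]
    rw [hgl]
    have hev2 : ∀ᶠ k : ℕ in atTop, (0:ℝ) = χ ((T ^ k) B) ^ ((1:ℝ)/k) := by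
      filter_upwards [eventually_ge_atTop (max m₀ 1)] with k hk
      have hk1 : 1 ≤ k := le_trans (le_max_right _ _) hk
      have hkm : m₀ ≤ k := le_trans (le_max_left _ _) hk
      rw [hk0 k hkm B, map_zero, Real.zero_rpow]
      exact one_div_ne_zero (Nat.cast_ne_zero.mpr (by omega))
    exact Tendsto.congr' hev2 tendsto_const_nhds
end
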